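/- There exists a constant c > 0 depending only on the bounded Vilenkin sequence m such that for every n with M_A ≤ n < M_{A+1} and every x ∈ G_m, n|K_n(x)| ≤ c ∑_{s=0}^{A} M_s ∑_{j=s}^{A} ∑_{x_s=1}^{m_s-1} D_{M_j}(x − x_s e_s). -/

import Mathlib

open Complex Finset

noncomputable section

/-- The generalized number system: `M 0 = 1`, `M (k+1) = m k * M k`. -/
def Mf (m : ℕ → ℕ) : ℕ → ℕ
  | 0 => 1
  | k + 1 => m k * Mf m k

/-- The generalized Rademacher function `r_k(x) = exp(2πi x_k / m_k)`. -/
def rad (m : ℕ → ℕ) (k : ℕ) (x : ∀ j, ZMod (m j)) : ℂ :=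
  Complex.exp (2 * Real.pi * Complex.I * (x k).val / (m k))

/-- The Vilenkin function `ψ_n(x) = ∏ k, r_k(x)^{n_k}` where `n_k = (n / M_k) % m_k`
is the k-th digit of `n` in the generalized number system. -/
def psi (m : ℕ → ℕ) (n : ℕ) (x : ∀ j, ZMod (m j)) : ℂ :=
  ∏ k ∈ Finset.range (n + 1), rad m k x ^ ((n / Mf m k) % m k)

/-- Vilenkin Dirichlet kernel. -/
def Dker (m : ℕ → ℕ) (n : ℕ) (x : ∀ j, ZMod (m j)) : ℂ :=
  ∑ j ∈ Finset.range n, psi m j x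

/-- One-dimensional Vilenkin Fejér kernel. -/
def Fejer (m : ℕ → ℕ) (n : ℕ) (x : ∀ j, ZMod (m j)) : ℂ :=
  (n : ℂ)⁻¹ * ∑ k ∈ Finset.range n, Dker m k x

/-- Two-dimensional Marcinkiewicz–Fejér kernel. -/
def MKer (m : ℕ → ℕ) (n : ℕ) (x y : ∀ j, ZMod (m j)) : ℂ :=
  (n : ℂ)⁻¹ * ∑ k ∈ Finset.range n, Dker m k x * Dker m k y

/-- `e_s ∈ G_m`: the element whose s-th coordinate is 1 and all others are 0. -/
def evec (m : ℕ → ℕ) (s : ℕ) : ∀ j, ZMod (m j) :=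
  fun j => if j = s then 1 else 0

/-- `r_{i,n}(x,y) = ∏_{l=i}^{n} ∑_{s=0}^{m_l-1} ψ_{M_l}(x+y)^s`. -/
def rr (m : ℕ → ℕ) (i n : ℕ) (x y : ∀ j, ZMod (m j)) : ℂ :=
  ∏ l ∈ Finset.Icc i n, ∑ s ∈ Finset.range (m l), psi m (Mf m l) (x + y) ^ s

section VilenkinAux

variable (m : ℕ → ℕ)

lemma Mf_pos (hm : ∀ k, 2 ≤ m k) (k : ℕ) : 0 < Mf m k := by
  induction k with
  | zero => simp [Mf]
  | succ k ih => have := hm k; exact Nat.mul_pos (by omega) ih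

lemma two_pow_le_Mf (hm : ∀ k, 2 ≤ m k) (k : ℕ) : 2 ^ k ≤ Mf m k := by
  induction k with
  | zero => simp [Mf]
  | succ k ih => calc 2 ^ (k+1) = 2 * 2 ^ k := by ring
    _ ≤ m k * Mf m k := Nat.mul_le_mul (hm k) ih
    _ = Mf m (k+1) := rfl

lemma Mf_prod (k : ℕ) : Mf m k = ∏ l ∈ range k, m l := by
  induction k with
  | zero => simp [Mf]
  | succ k ih => rw [prod_range_succ, ← ih, show Mf m (k+1) = m k * Mf m k from rfl, mul_comm]

lemma Mf_factor {k j : ℕ} (h : k ≤ j) : Mf m j = Mf m k * ∏ l ∈ Ico k j, m l := by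
  induction j, h using Nat.le_induction with
  | base => simp
  | succ j hj ih =>
      rw [show Mf m (j+1) = m j * Mf m j from rfl, ih, Finset.prod_Ico_succ_top hj]
      ring

lemma Mf_mono (hm : ∀ k, 2 ≤ m k) {k j : ℕ} (h : k ≤ j) : Mf m k ≤ Mf m j := by
  rw [Mf_factor m h]
  have : 0 < ∏ l ∈ Ico k j, m l := Finset.prod_pos fun l _ => by have := hm l; omega
  nlinarith [Mf_pos m hm k]

lemma sum_Mf_le (hm : ∀ k, 2 ≤ m k) (t : ℕ) : ∑ u ∈ range t, Mf m u ≤ Mf m t := by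
  induction t with
  | zero => simp
  | succ t ih =>
      rw [sum_range_succ]
      have h2 : 2 * Mf m t ≤ m t * Mf m t := Nat.mul_le_mul (hm t) le_rfl
      have : Mf m (t+1) = m t * Mf m t := rfl
      omega

lemma psi_ext (hm : ∀ k, 2 ≤ m k) (i N : ℕ) (hN : i < N) (x : ∀ j, ZMod (m j)) :
    psi m i x = ∏ k ∈ range N, rad m k x ^ ((i / Mf m k) % m k) := by
  rw [psi, ← Finset.prod_range_mul_prod_Ico _ (show i + 1 ≤ N by omega)]
  have : ∏ k ∈ Ico (i+1) N, rad m k x ^ ((i / Mf m k) % m k) = 1 := by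
    apply Finset.prod_eq_one
    intro k hk
    obtain ⟨hk1, hk2⟩ := Finset.mem_Ico.mp hk
    have hi : i < Mf m k := by
      have h1 : i < 2 ^ i := Nat.lt_two_pow_self
      have h2 : (2:ℕ) ^ i ≤ 2 ^ k := Nat.pow_le_pow_right (by norm_num) (by omega)
      have := two_pow_le_Mf m hm k
      omega
    rw [Nat.div_eq_of_lt hi]
    simp
  rw [this, mul_one]


lemma psi_block (hm : ∀ k, 2 ≤ m k) {j a i : ℕ} (ha : a < m j) (hi : i < Mf m j)
    (x : ∀ j, ZMod (m j)) :
    psi m (a * Mf m j + i) x = rad m j x ^ a * psi m i x := by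
  set n := a * Mf m j + i with hn
  have hMj := Mf_pos m hm j
  have hd : ∀ k, (n / Mf m k) % m k = (i / Mf m k) % m k + (if k = j then a else 0) := by
    intro k
    rcases lt_trichotomy k j with hkj | hkj | hkj
    · rw [if_neg (by omega), add_zero]
      obtain ⟨c', hc'⟩ : m k ∣ ∏ l ∈ Ico k j, m l :=
        Finset.dvd_prod_of_mem _ (Finset.mem_Ico.mpr ⟨le_rfl, hkj⟩)
      have hfac := Mf_factor m (le_of_lt hkj)
      have hnk : n = i + (a * c') * m k * Mf m k := by
        rw [hn, hfac, hc']; ring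
      have hMk := Mf_pos m hm k
      rw [hnk, show i + a * c' * m k * Mf m k = i + (a * c' * m k) * Mf m k by ring,
        Nat.add_mul_div_right _ _ hMk, Nat.add_mul_mod_self_right]
    · subst hkj
      have h1 : n / Mf m k = a := by
        rw [hn, mul_comm, Nat.mul_add_div hMj, Nat.div_eq_of_lt hi, add_zero]
      rw [h1, if_pos rfl, Nat.div_eq_of_lt hi, Nat.zero_mod, zero_add, Nat.mod_eq_of_lt ha]
    · rw [if_neg (by omega), add_zero]
      have hjk : Mf m (j+1) ≤ Mf m k := Mf_mono m hm (by omega)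
      have h1 : n < Mf m k := by
        have : n < m j * Mf m j := by
          have h3 : (a+1) * Mf m j ≤ m j * Mf m j := Nat.mul_le_mul (by omega) le_rfl
          have h4 : n < (a+1) * Mf m j := by rw [hn]; nlinarith
          omega
        have : Mf m (j+1) = m j * Mf m j := rfl
        omega
      have h2 : i < Mf m k := by omega
      rw [Nat.div_eq_of_lt h1, Nat.div_eq_of_lt h2]
  have hiN : i < n + j + 1 := by omega
  have hjN : j < n + j + 1 := by omega
  rw [psi_ext m hm n (n + j + 1) (by omega), psi_ext m hm i (n + j + 1) hiN]
  calc ∏ k ∈ range (n + j + 1), rad m k x ^ ((n / Mf m k) % m k)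
      = ∏ k ∈ range (n + j + 1),
          (rad m k x ^ ((i / Mf m k) % m k) * if k = j then rad m k x ^ a else 1) := by
        refine Finset.prod_congr rfl fun k _ => ?_
        rw [hd k]
        by_cases hkj : k = j
        · rw [if_pos hkj, if_pos hkj, pow_add]
        · rw [if_neg hkj, if_neg hkj, add_zero, mul_one]
    _ = (∏ k ∈ range (n + j + 1), rad m k x ^ ((i / Mf m k) % m k)) *
          ∏ k ∈ range (n + j + 1), (if k = j then rad m k x ^ a else 1) := by
        rw [Finset.prod_mul_distrib]
    _ = rad m j x ^ a * ∏ k ∈ range (n + j + 1), rad m k x ^ ((i / Mf m k) % m k) := by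
        rw [Finset.prod_ite_eq' (range (n + j + 1)) j (fun k => rad m k x ^ a),
          if_pos (Finset.mem_range.mpr hjN), mul_comm]

lemma sum_range_add' {M : Type*} [AddCommMonoid M] (f : ℕ → M) (a b : ℕ) :
    ∑ k ∈ range (a + b), f k = ∑ k ∈ range a, f k + ∑ k ∈ range b, f (a + k) := by
  induction b with
  | zero => simp
  | succ b ih =>
      rw [show a + (b+1) = (a+b) + 1 by ring, sum_range_succ, ih, sum_range_succ, add_assoc]

lemma Dker_block (hm : ∀ k, 2 ≤ m k) {j b i : ℕ} (hb : b < m j) (hi : i ≤ Mf m j)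
    (x : ∀ j, ZMod (m j)) :
    Dker m (b * Mf m j + i) x = Dker m (b * Mf m j) x + rad m j x ^ b * Dker m i x := by
  unfold Dker
  rw [sum_range_add', Finset.mul_sum]
  congr 1
  exact Finset.sum_congr rfl fun k hk =>
    psi_block m hm hb (lt_of_lt_of_le (Finset.mem_range.mp hk) hi) x

lemma Dker_mulblock (hm : ∀ k, 2 ≤ m k) {j b : ℕ} (hb : b ≤ m j) (x : ∀ j, ZMod (m j)) :
    Dker m (b * Mf m j) x = (∑ c ∈ range b, rad m j x ^ c) * Dker m (Mf m j) x := by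
  induction b with
  | zero => simp [Dker]
  | succ b ih =>
      rw [show (b+1) * Mf m j = b * Mf m j + Mf m j by ring,
        Dker_block m hm (by omega) le_rfl, ih (by omega), sum_range_succ, add_mul]

lemma rad_pow_card (hm : ∀ k, 2 ≤ m k) (k : ℕ) (x : ∀ j, ZMod (m j)) :
    rad m k x ^ (m k) = 1 := by
  have hmk : (m k : ℂ) ≠ 0 := Nat.cast_ne_zero.mpr (by have := hm k; omega)
  rw [rad, ← Complex.exp_nat_mul]
  have : (m k : ℂ) * (2 * Real.pi * Complex.I * ((x k).val : ℂ) / (m k)) =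
      (((x k).val : ℤ) : ℂ) * (2 * Real.pi * Complex.I) := by
    field_simp
    norm_cast
  rw [this, Complex.exp_int_mul_two_pi_mul_I]

lemma rad_ne_one (hm : ∀ k, 2 ≤ m k) (k : ℕ) (x : ∀ j, ZMod (m j)) (hx : x k ≠ 0) :
    rad m k x ≠ 1 := by
  haveI : NeZero (m k) := ⟨by have := hm k; omega⟩
  intro h
  rw [rad, Complex.exp_eq_one_iff] at h
  obtain ⟨n, hn⟩ := h
  have h2pi : (2 * (Real.pi : ℂ) * Complex.I) ≠ 0 := by
    simp [Real.pi_ne_zero, Complex.I_ne_zero]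
  have hmk : (m k : ℂ) ≠ 0 := Nat.cast_ne_zero.mpr (by have := hm k; omega)
  have h3 : (2 * (Real.pi:ℂ) * Complex.I) * (((x k).val : ℂ) / (m k)) =
      (2 * (Real.pi:ℂ) * Complex.I) * (n : ℂ) := by
    linear_combination hn
  have hdiv : ((x k).val : ℂ) / (m k) = (n : ℂ) := mul_left_cancel₀ h2pi h3
  have hvC : ((x k).val : ℂ) = (n : ℂ) * (m k : ℂ) := (div_eq_iff hmk).mp hdiv
  have hvZ : ((x k).val : ℤ) = n * (m k : ℤ) := by exact_mod_cast hvC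
  have hlt : (x k).val < m k := ZMod.val_lt (x k)
  have hne : (x k).val ≠ 0 := fun h0 => hx ((ZMod.val_eq_zero (x k)).mp h0)
  have hdvd : ((m k : ℤ)) ∣ ((x k).val : ℤ) := ⟨n, by rw [hvZ]; ring⟩
  have hle : ((m k : ℤ)) ≤ ((x k).val : ℤ) := Int.le_of_dvd (by omega) hdvd
  omega

lemma geo_sum (hm : ∀ k, 2 ≤ m k) (k : ℕ) (x : ∀ j, ZMod (m j)) :
    ∑ c ∈ range (m k), rad m k x ^ c = if x k = 0 then (m k : ℂ) else 0 := by
  haveI : NeZero (m k) := ⟨by have := hm k; omega⟩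
  by_cases hx : x k = 0
  · rw [if_pos hx]
    have : rad m k x = 1 := by
      rw [rad, hx, ZMod.val_zero]
      simp
    simp [this]
  · rw [if_neg hx, geom_sum_eq (rad_ne_one m hm k x hx), rad_pow_card m hm k x,
      sub_self, zero_div]

lemma Dker_one (x : ∀ j, ZMod (m j)) : Dker m 1 x = 1 := by
  simp [Dker, psi]

lemma Dker_Mf (hm : ∀ k, 2 ≤ m k) (t : ℕ) (x : ∀ j, ZMod (m j)) :
    Dker m (Mf m t) x = ∏ k ∈ range t, (if x k = 0 then (m k : ℂ) else 0) := by
  induction t with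
  | zero => simpa [Mf] using Dker_one m x
  | succ t ih =>
      rw [show Mf m (t+1) = m t * Mf m t from rfl, Dker_mulblock m hm le_rfl,
        geo_sum m hm, ih, prod_range_succ, mul_comm]

lemma Dker_Mf_eq_of (hm : ∀ k, 2 ≤ m k) (t : ℕ) (x : ∀ j, ZMod (m j))
    (h : ∀ k, k < t → x k = 0) : Dker m (Mf m t) x = (Mf m t : ℂ) := by
  rw [Dker_Mf m hm, Mf_prod m t]
  push_cast
  exact Finset.prod_congr rfl fun k hk => if_pos (h k (Finset.mem_range.mp hk))

lemma Dker_Mf_eq_zero (hm : ∀ k, 2 ≤ m k) (t : ℕ) (x : ∀ j, ZMod (m j))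
    (h : ¬ ∀ k, k < t → x k = 0) : Dker m (Mf m t) x = 0 := by
  push_neg at h
  obtain ⟨k, hk, hxk⟩ := h
  rw [Dker_Mf m hm]
  exact Finset.prod_eq_zero (Finset.mem_range.mpr hk) (if_neg hxk)

lemma norm_Dker_Mf (hm : ∀ k, 2 ≤ m k) (t : ℕ) (x : ∀ j, ZMod (m j)) :
    ‖Dker m (Mf m t) x‖ = if (∀ k, k < t → x k = 0) then (Mf m t : ℝ) else 0 := by
  by_cases h : ∀ k, k < t → x k = 0
  · rw [if_pos h, Dker_Mf_eq_of m hm t x h, Complex.norm_natCast]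
  · rw [if_neg h, Dker_Mf_eq_zero m hm t x h, norm_zero]

lemma Dker_Mf_congr (hm : ∀ k, 2 ≤ m k) (t : ℕ) (x y : ∀ j, ZMod (m j))
    (h : ∀ k, k < t → x k = y k) : Dker m (Mf m t) x = Dker m (Mf m t) y := by
  rw [Dker_Mf m hm, Dker_Mf m hm]
  exact Finset.prod_congr rfl fun k hk => by rw [h k (Finset.mem_range.mp hk)]

lemma norm_rad (k : ℕ) (x : ∀ j, ZMod (m j)) : ‖rad m k x‖ = 1 := by
  have : 2 * (Real.pi:ℂ) * Complex.I * ((x k).val : ℂ) / (m k) =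
      ((2 * Real.pi * ((x k).val : ℝ) / (m k) : ℝ) : ℂ) * Complex.I := by
    push_cast
    ring
  rw [rad, this, Complex.norm_exp_ofReal_mul_I]

lemma norm_psi (n : ℕ) (x : ∀ j, ZMod (m j)) : ‖psi m n x‖ = 1 := by
  rw [psi, norm_prod]
  refine Finset.prod_eq_one fun k _ => ?_
  rw [norm_pow, norm_rad, one_pow]

lemma norm_Dker_le (n : ℕ) (x : ∀ j, ZMod (m j)) : ‖Dker m n x‖ ≤ n := by
  calc ‖Dker m n x‖ ≤ ∑ j ∈ range n, ‖psi m j x‖ := norm_sum_le _ _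
    _ = ∑ _j ∈ range n, (1:ℝ) := Finset.sum_congr rfl fun j _ => norm_psi m j x
    _ = n := by simp

def Svil (n : ℕ) (x : ∀ j, ZMod (m j)) : ℂ := ∑ k ∈ Finset.range n, Dker m k x

lemma Svil_one (x : ∀ j, ZMod (m j)) : Svil m 1 x = 0 := by
  simp [Svil, Dker]

lemma Svil_mul (hm : ∀ k, 2 ≤ m k) {j q : ℕ} (hq : q ≤ m j) (x : ∀ j, ZMod (m j)) :
    Svil m (q * Mf m j) x =
      (Mf m j : ℂ) * (∑ b ∈ range q, ∑ c ∈ range b, rad m j x ^ c) * Dker m (Mf m j) x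
      + (∑ b ∈ range q, rad m j x ^ b) * Svil m (Mf m j) x := by
  induction q with
  | zero => simp [Svil]
  | succ q ih =>
      have hq' : q < m j := by omega
      have key : ∑ i ∈ range (Mf m j), Dker m (q * Mf m j + i) x
          = (Mf m j : ℂ) * ((∑ c ∈ range q, rad m j x ^ c) * Dker m (Mf m j) x)
            + rad m j x ^ q * Svil m (Mf m j) x := by
        have h1 : ∀ i ∈ range (Mf m j), Dker m (q * Mf m j + i) x
            = (∑ c ∈ range q, rad m j x ^ c) * Dker m (Mf m j) x
              + rad m j x ^ q * Dker m i x := fun i hi => by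
          rw [Dker_block m hm hq' (le_of_lt (mem_range.mp hi)) x,
            Dker_mulblock m hm (le_of_lt hq') x]
        rw [Finset.sum_congr rfl h1, Finset.sum_add_distrib, Finset.sum_const, card_range,
          ← Finset.mul_sum, nsmul_eq_mul]
        rfl
      have h2 : Svil m ((q+1) * Mf m j) x
          = Svil m (q * Mf m j) x + ∑ i ∈ range (Mf m j), Dker m (q * Mf m j + i) x := by
        rw [show (q+1) * Mf m j = q * Mf m j + Mf m j by ring]
        unfold Svil
        rw [sum_range_add']
      rw [h2, ih (by omega), key, sum_range_succ, sum_range_succ]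
      ring

lemma Svil_block (hm : ∀ k, 2 ≤ m k) {j q r : ℕ} (hq : q < m j) (hr : r ≤ Mf m j)
    (x : ∀ j, ZMod (m j)) :
    Svil m (q * Mf m j + r) x = Svil m (q * Mf m j) x
      + (r : ℂ) * (∑ c ∈ range q, rad m j x ^ c) * Dker m (Mf m j) x
      + rad m j x ^ q * Svil m r x := by
  unfold Svil
  rw [sum_range_add']
  have h1 : ∀ i ∈ range r, Dker m (q * Mf m j + i) x
      = (∑ c ∈ range q, rad m j x ^ c) * Dker m (Mf m j) x
        + rad m j x ^ q * Dker m i x := fun i hi => by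
    rw [Dker_block m hm hq (le_trans (le_of_lt (mem_range.mp hi)) hr) x,
      Dker_mulblock m hm (le_of_lt hq) x]
  rw [Finset.sum_congr rfl h1, Finset.sum_add_distrib, Finset.sum_const, card_range,
    ← Finset.mul_sum, nsmul_eq_mul]
  ring

lemma norm_radsum_le (q k : ℕ) (x : ∀ j, ZMod (m j)) :
    ‖∑ b ∈ range q, rad m k x ^ b‖ ≤ q := by
  calc ‖∑ b ∈ range q, rad m k x ^ b‖ ≤ ∑ b ∈ range q, ‖rad m k x ^ b‖ := norm_sum_le _ _
    _ = ∑ _b ∈ range q, (1:ℝ) := Finset.sum_congr rfl fun b _ => by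
        rw [norm_pow, norm_rad, one_pow]
    _ = q := by simp

lemma norm_radsum2_le (q k : ℕ) (x : ∀ j, ZMod (m j)) :
    ‖∑ b ∈ range q, ∑ c ∈ range b, rad m k x ^ c‖ ≤ (q:ℝ) * q := by
  calc ‖∑ b ∈ range q, ∑ c ∈ range b, rad m k x ^ c‖
      ≤ ∑ b ∈ range q, ‖∑ c ∈ range b, rad m k x ^ c‖ := norm_sum_le _ _
    _ ≤ ∑ b ∈ range q, (b:ℝ) := Finset.sum_le_sum fun b _ => norm_radsum_le m b k x
    _ ≤ ∑ _b ∈ range q, (q:ℝ) := Finset.sum_le_sum fun b hb => by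
        exact_mod_cast Nat.le_of_lt (mem_range.mp hb)
    _ = q * q := by simp [mul_comm]

set_option maxHeartbeats 1000000 in
lemma Svil_rec (hm : ∀ k, 2 ≤ m k) (B : ℕ) (hB : ∀ k, m k ≤ B) (A : ℕ) :
    ∀ n, n < Mf m (A+1) → ∀ x : (∀ j, ZMod (m j)),
    ‖Svil m n x‖ ≤ (B:ℝ)^2 *
      ∑ t ∈ range (A+1), ((Mf m t : ℝ) * ‖Dker m (Mf m t) x‖ + ‖Svil m (Mf m t) x‖) := by
  induction A with
  | zero =>
      intro n hn x
      have hm0 : Mf m 1 = m 0 := by show m 0 * Mf m 0 = m 0; simp [Mf]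
      have hnB : (n:ℝ) ≤ B := by
        have := hB 0; rw [hm0] at hn; exact_mod_cast by omega
      have key : ‖Svil m n x‖ ≤ (n:ℝ) * n := by
        calc ‖Svil m n x‖ ≤ ∑ k ∈ range n, ‖Dker m k x‖ := norm_sum_le _ _
          _ ≤ ∑ k ∈ range n, (k:ℝ) := Finset.sum_le_sum fun k _ => norm_Dker_le m k x
          _ ≤ ∑ _k ∈ range n, (n:ℝ) := Finset.sum_le_sum fun k hk => by
              exact_mod_cast Nat.le_of_lt (mem_range.mp hk)
          _ = n * n := by simp [mul_comm]
      have hrhs : ∑ t ∈ range 1, ((Mf m t : ℝ) * ‖Dker m (Mf m t) x‖ + ‖Svil m (Mf m t) x‖)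
          = 1 := by
        rw [Finset.sum_range_one]
        show (Mf m 0 : ℝ) * ‖Dker m (Mf m 0) x‖ + ‖Svil m (Mf m 0) x‖ = 1
        have : Mf m 0 = 1 := rfl
        rw [this, Svil_one, Dker_one]
        simp
      rw [hrhs, mul_one]
      have hn0 : (0:ℝ) ≤ n := Nat.cast_nonneg n
      nlinarith
  | succ A ih =>
      intro n hn x
      set M := Mf m (A+1) with hMdef
      have hM : 0 < M := Mf_pos m hm (A+1)
      set q := n / M with hqdef
      set r := n % M with hrdef
      have hqm : q < m (A+1) := by
        rw [hqdef, Nat.div_lt_iff_lt_mul hM]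
        exact hn
      have hnqr : n = q * M + r := by
        rw [hqdef, hrdef, mul_comm]
        exact (Nat.div_add_mod n M).symm
      have hr : r < M := Nat.mod_lt _ hM
      have hqB : (q:ℝ) ≤ (B:ℝ) - 1 := by
        have h1 : q + 1 ≤ B := le_trans hqm (hB (A+1))
        have : (q:ℝ) + 1 ≤ B := by exact_mod_cast h1
        linarith
      have hB2 : (2:ℝ) ≤ B := by exact_mod_cast le_trans (hm 0) (hB 0)
      set DM := ‖Dker m M x‖ with hDM
      set SM := ‖Svil m M x‖ with hSM
      have hDM0 : 0 ≤ DM := norm_nonneg _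
      have hSM0 : 0 ≤ SM := norm_nonneg _
      have e1 : Svil m n x = Svil m (q * M) x
          + (r : ℂ) * (∑ c ∈ range q, rad m (A+1) x ^ c) * Dker m M x
          + rad m (A+1) x ^ q * Svil m r x := by
        rw [hnqr]; exact Svil_block m hm hqm (le_of_lt hr) x
      have e2 : ‖Svil m (q * M) x‖ ≤ (M:ℝ) * ((q:ℝ)*q) * DM + (q:ℝ) * SM := by
        rw [Svil_mul m hm (le_of_lt hqm) x]
        calc ‖_ + _‖ ≤ ‖(M : ℂ) * (∑ b ∈ range q, ∑ c ∈ range b, rad m (A+1) x ^ c)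
              * Dker m M x‖ + ‖(∑ b ∈ range q, rad m (A+1) x ^ b) * Svil m M x‖ :=
              norm_add_le _ _
          _ ≤ (M:ℝ) * ((q:ℝ)*q) * DM + (q:ℝ) * SM := by
              rw [norm_mul, norm_mul, norm_mul, Complex.norm_natCast, ← hDM, ← hSM]
              gcongr
              · exact norm_radsum2_le m q (A+1) x
              · exact norm_radsum_le m q (A+1) x
      have e3 : ‖Svil m n x‖ ≤ ‖Svil m (q*M) x‖ + (r:ℝ) * (q:ℝ) * DM + ‖Svil m r x‖ := by
        rw [e1]
        calc ‖_ + _ + _‖ ≤ ‖Svil m (q * M) x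
              + (r : ℂ) * (∑ c ∈ range q, rad m (A+1) x ^ c) * Dker m M x‖
              + ‖rad m (A+1) x ^ q * Svil m r x‖ := norm_add_le _ _
          _ ≤ ‖Svil m (q*M) x‖
              + ‖(r : ℂ) * (∑ c ∈ range q, rad m (A+1) x ^ c) * Dker m M x‖
              + ‖rad m (A+1) x ^ q * Svil m r x‖ := by
                have := norm_add_le (Svil m (q * M) x)
                  ((r : ℂ) * (∑ c ∈ range q, rad m (A+1) x ^ c) * Dker m M x)
                linarith
          _ ≤ ‖Svil m (q*M) x‖ + (r:ℝ) * (q:ℝ) * DM + ‖Svil m r x‖ := by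
              rw [norm_mul, norm_mul, norm_mul, norm_pow, norm_rad, Complex.norm_natCast,
                one_pow, one_mul, ← hDM]
              gcongr
              exact norm_radsum_le m q (A+1) x
      have e4 : ‖Svil m r x‖ ≤ (B:ℝ)^2 *
          ∑ t ∈ range (A+1), ((Mf m t : ℝ) * ‖Dker m (Mf m t) x‖ + ‖Svil m (Mf m t) x‖) :=
        ih r hr x
      have hrM : (r:ℝ) ≤ (M:ℝ) := by exact_mod_cast le_of_lt hr
      clear_value M q r DM SM
      have key : ‖Svil m n x‖ ≤ (B:ℝ)^2 * ((M:ℝ) * DM + SM) + ‖Svil m r x‖ := by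
        have hMR : (0:ℝ) ≤ M := Nat.cast_nonneg M
        have hq0 : (0:ℝ) ≤ q := Nat.cast_nonneg q
        have c1 : (q:ℝ)*q + q ≤ (B:ℝ)^2 := by nlinarith
        have c2 : (r:ℝ) * q * DM ≤ (M:ℝ) * q * DM := by
          have := mul_nonneg (mul_nonneg (sub_nonneg.mpr hrM) hq0) hDM0
          nlinarith
        have c3 : (M:ℝ) * ((q:ℝ)*q) * DM + (M:ℝ) * q * DM ≤ (B:ℝ)^2 * ((M:ℝ) * DM) := by
          have := mul_nonneg (sub_nonneg.mpr c1) (mul_nonneg hMR hDM0)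
          nlinarith
        have c4 : (q:ℝ) * SM ≤ (B:ℝ)^2 * SM := by
          have hqB2 : (q:ℝ) ≤ (B:ℝ)^2 := by nlinarith
          have := mul_nonneg (sub_nonneg.mpr hqB2) hSM0
          nlinarith
        linarith
      rw [hDM, hSM, hMdef] at key
      rw [sum_range_succ, mul_add]
      linarith [key, e4]

lemma sub_evec_apply {v s k : ℕ} (hks : k ≠ s) (x : ∀ j, ZMod (m j)) :
    (x - v • evec m s) k = x k := by
  simp [evec, hks]

lemma sub_evec_apply_self (v s : ℕ) (x : ∀ j, ZMod (m j)) :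
    (x - v • evec m s) s = x s - (v : ZMod (m s)) := by
  simp [evec]

lemma norm_Dker_Mf_succ (hm : ∀ k, 2 ≤ m k) (t : ℕ) (y : ∀ j, ZMod (m j)) (hy : y t = 0) :
    ‖Dker m (Mf m (t+1)) y‖ = (m t : ℝ) * ‖Dker m (Mf m t) y‖ := by
  rw [norm_Dker_Mf m hm, norm_Dker_Mf m hm]
  by_cases h : ∀ k, k < t → y k = 0
  · rw [if_pos h, if_pos (fun k hk => by
      rcases Nat.lt_succ_iff_lt_or_eq.mp hk with h' | h'
      · exact h k h'
      · rw [h']; exact hy)]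
    push_cast [show Mf m (t+1) = m t * Mf m t from rfl]
    ring
  · rw [if_neg h, if_neg (fun h' => h fun k hk => h' k (by omega)), mul_zero]

set_option maxHeartbeats 1000000 in
lemma Svil_Mf_bound (hm : ∀ k, 2 ≤ m k) (B : ℕ) (hB : ∀ k, m k ≤ B) (t : ℕ)
    (x : ∀ j, ZMod (m j)) :
    ‖Svil m (Mf m t) x‖ ≤ (B:ℝ)^2 * ∑ u ∈ range t,
      (Mf m u : ℝ) * ‖Dker m (Mf m t) (x - ((x u).val) • evec m u)‖ := by
  induction t with
  | zero =>
      rw [show Mf m 0 = 1 from rfl, Svil_one]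
      simp
  | succ t ih =>
      haveI : NeZero (m t) := ⟨by have := hm t; omega⟩
      have hBm : (m t : ℝ) ≤ B := by exact_mod_cast hB t
      have hB1 : (1:ℝ) ≤ B := by
        have := hm t; have := hB t; exact_mod_cast by omega
      have hm0 : (0:ℝ) ≤ m t := Nat.cast_nonneg _
      have hMt0 : (0:ℝ) ≤ (Mf m t : ℝ) := Nat.cast_nonneg _
      have e0 : Svil m (Mf m (t+1)) x =
          (Mf m t : ℂ) * (∑ b ∈ range (m t), ∑ c ∈ range b, rad m t x ^ c)
            * Dker m (Mf m t) x
          + (if x t = 0 then (m t:ℂ) else 0) * Svil m (Mf m t) x := by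
        have h := Svil_mul m hm (le_refl (m t)) x
        rw [geo_sum m hm t x] at h
        exact h
      have hG2 : ‖∑ b ∈ range (m t), ∑ c ∈ range b, rad m t x ^ c‖ ≤ (m t:ℝ) * m t :=
        norm_radsum2_le m (m t) t x
      by_cases hx : x t = 0
      · have hval : (x t).val = 0 := by rw [hx]; exact ZMod.val_zero
        have hyt : ∀ u, u < t + 1 → (x - ((x u).val) • evec m u) t = 0 := by
          intro u hu
          rcases eq_or_ne u t with h' | h'
          · subst h'
            rw [hval]
            simp [hx]
          · rw [sub_evec_apply m (Ne.symm h') x]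
            exact hx
        have hstep : ∀ u, u < t + 1 →
            ‖Dker m (Mf m (t+1)) (x - ((x u).val) • evec m u)‖
              = (m t : ℝ) * ‖Dker m (Mf m t) (x - ((x u).val) • evec m u)‖ := fun u hu =>
          norm_Dker_Mf_succ m hm t _ (hyt u hu)
        have hxt : (x - ((x t).val) • evec m t) = x := by
          rw [hval]
          simp
        have e1 : ‖Svil m (Mf m (t+1)) x‖ ≤
            (Mf m t:ℝ) * ((m t:ℝ) * m t) * ‖Dker m (Mf m t) x‖
            + (m t:ℝ) * ‖Svil m (Mf m t) x‖ := by
          rw [e0, if_pos hx]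
          calc ‖_ + _‖ ≤ ‖(Mf m t : ℂ) * (∑ b ∈ range (m t), ∑ c ∈ range b, rad m t x ^ c)
                * Dker m (Mf m t) x‖ + ‖(m t:ℂ) * Svil m (Mf m t) x‖ := norm_add_le _ _
            _ ≤ (Mf m t:ℝ) * ((m t:ℝ) * m t) * ‖Dker m (Mf m t) x‖
                + (m t:ℝ) * ‖Svil m (Mf m t) x‖ := by
                rw [norm_mul, norm_mul, norm_mul, Complex.norm_natCast, Complex.norm_natCast]
                gcongr
        have hsum : ∑ u ∈ range (t+1),
            (Mf m u : ℝ) * ‖Dker m (Mf m (t+1)) (x - ((x u).val) • evec m u)‖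
            = (m t:ℝ) * (∑ u ∈ range t,
                (Mf m u : ℝ) * ‖Dker m (Mf m t) (x - ((x u).val) • evec m u)‖)
              + (Mf m t:ℝ) * ((m t:ℝ) * ‖Dker m (Mf m t) x‖) := by
          rw [sum_range_succ, Finset.mul_sum]
          congr 1
          · exact Finset.sum_congr rfl fun u hu => by
              have := mem_range.mp hu
              rw [hstep u (by omega)]
              ring
          · rw [hstep t (by omega), hxt]
        have hih := ih
        have hD0 : (0:ℝ) ≤ ‖Dker m (Mf m t) x‖ := norm_nonneg _
        have hS0 : (0:ℝ) ≤ ∑ u ∈ range t,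
            (Mf m u : ℝ) * ‖Dker m (Mf m t) (x - ((x u).val) • evec m u)‖ :=
          Finset.sum_nonneg fun u _ => mul_nonneg (Nat.cast_nonneg _) (norm_nonneg _)
        rw [hsum]
        have c1 : (Mf m t:ℝ) * ((m t:ℝ) * m t) * ‖Dker m (Mf m t) x‖
            ≤ (B:ℝ)^2 * ((Mf m t:ℝ) * ((m t:ℝ) * ‖Dker m (Mf m t) x‖)) := by
          have : (m t:ℝ) ≤ (B:ℝ)^2 := by nlinarith
          nlinarith [mul_nonneg hMt0 (mul_nonneg hm0 hD0)]
        have c2 : (m t:ℝ) * ‖Svil m (Mf m t) x‖ ≤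
            (B:ℝ)^2 * ((m t:ℝ) * (∑ u ∈ range t,
              (Mf m u : ℝ) * ‖Dker m (Mf m t) (x - ((x u).val) • evec m u)‖)) := by
          have h2 := mul_le_mul_of_nonneg_left hih hm0
          nlinarith [norm_nonneg (Svil m (Mf m t) x)]
        linarith [e1, c1, c2]
      · -- x t ≠ 0
        have e1 : Svil m (Mf m (t+1)) x =
            (Mf m t : ℂ) * (∑ b ∈ range (m t), ∑ c ∈ range b, rad m t x ^ c)
              * Dker m (Mf m t) x := by
          rw [e0, if_neg hx, zero_mul, add_zero]
        set y := x - ((x t).val) • evec m t with hy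
        have hyt : y t = 0 := by
          rw [hy, sub_evec_apply_self]
          have : (((x t).val : ℕ) : ZMod (m t)) = x t := ZMod.natCast_rightInverse (x t)
          rw [this, sub_self]
        have hagree : ∀ k, k < t → y k = x k := fun k hk =>
          sub_evec_apply m (by omega) x
        have hDy : ‖Dker m (Mf m (t+1)) y‖ = (m t:ℝ) * ‖Dker m (Mf m t) x‖ := by
          rw [norm_Dker_Mf_succ m hm t y hyt, Dker_Mf_congr m hm t y x hagree]
        have e2 : ‖Svil m (Mf m (t+1)) x‖ ≤
            (Mf m t:ℝ) * ((m t:ℝ) * m t) * ‖Dker m (Mf m t) x‖ := by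
          rw [e1, norm_mul, norm_mul, Complex.norm_natCast]
          gcongr
        have key : ‖Svil m (Mf m (t+1)) x‖ ≤
            (B:ℝ)^2 * ((Mf m t : ℝ) * ‖Dker m (Mf m (t+1)) y‖) := by
          rw [hDy]
          have hD0 : (0:ℝ) ≤ ‖Dker m (Mf m t) x‖ := norm_nonneg _
          have hBB : (B:ℝ) ≤ (B:ℝ)^2 := by nlinarith
          have h1 : (m t:ℝ) * m t ≤ (B:ℝ)^2 * m t := by
            have := mul_le_mul_of_nonneg_right (le_trans hBm hBB) hm0
            nlinarith
          have h3 := mul_le_mul_of_nonneg_right h1 (mul_nonneg hMt0 hD0)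
          nlinarith [h3, e2]
        calc ‖Svil m (Mf m (t+1)) x‖ ≤
            (B:ℝ)^2 * ((Mf m t : ℝ) * ‖Dker m (Mf m (t+1)) y‖) := key
          _ ≤ (B:ℝ)^2 * ∑ u ∈ range (t+1),
              (Mf m u : ℝ) * ‖Dker m (Mf m (t+1)) (x - ((x u).val) • evec m u)‖ := by
              have hmem : t ∈ range (t+1) := mem_range.mpr (by omega)
              have hsingle : (Mf m t : ℝ) * ‖Dker m (Mf m (t+1)) (x - ((x t).val) • evec m t)‖
                  ≤ ∑ u ∈ range (t+1),
                    (Mf m u : ℝ) * ‖Dker m (Mf m (t+1)) (x - ((x u).val) • evec m u)‖ :=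
                Finset.single_le_sum (f := fun u =>
                    (Mf m u : ℝ) * ‖Dker m (Mf m (t+1)) (x - ((x u).val) • evec m u)‖)
                  (fun u _ => mul_nonneg (Nat.cast_nonneg _) (norm_nonneg _)) hmem
              have hB20 : (0:ℝ) ≤ (B:ℝ)^2 := by positivity
              rw [hy]
              exact mul_le_mul_of_nonneg_left hsingle hB20

end VilenkinAux

set_option maxHeartbeats 2000000 in
theorem stmt7 (m : ℕ → ℕ) (hm : ∀ k, 2 ≤ m k) (B : ℕ) (hB : ∀ k, m k ≤ B) :
    ∃ c : ℝ, 0 < c ∧ ∀ (A n : ℕ) (x : ∀ j, ZMod (m j)), Mf m A ≤ n → n < Mf m (A + 1) →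
      (n : ℝ) * ‖Fejer m n x‖ ≤
        c * ∑ s ∈ Finset.range (A + 1), (Mf m s : ℝ) *
          ∑ j ∈ Finset.Icc s A, ∑ v ∈ Finset.Icc 1 (m s - 1),
            ‖Dker m (Mf m j) (x - v • evec m s)‖ := by
  have hB2 : (2:ℝ) ≤ B := by exact_mod_cast le_trans (hm 0) (hB 0)
  have hB20 : (0:ℝ) ≤ (B:ℝ)^2 := by positivity
  refine ⟨(B:ℝ)^2 * (1 + 2*(B:ℝ)^2), by positivity, ?_⟩
  intro A n x hn1 hn2
  have hn0 : 0 < n := lt_of_lt_of_le (Mf_pos m hm A) hn1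
  -- reduce to Svil
  have hLHS : (n : ℝ) * ‖Fejer m n x‖ = ‖Svil m n x‖ := by
    have : Fejer m n x = (n:ℂ)⁻¹ * Svil m n x := rfl
    rw [this, norm_mul, norm_inv, Complex.norm_natCast]
    have hnR : (n:ℝ) ≠ 0 := by positivity
    field_simp
  -- the per-scale bound function
  set g : ℕ → ℝ := fun t => ∑ u ∈ range (t+1), (Mf m u : ℝ) *
    ∑ v ∈ Finset.Icc 1 (m u - 1), ‖Dker m (Mf m t) (x - v • evec m u)‖ with hg
  have hg0 : ∀ t, 0 ≤ g t := fun t => Finset.sum_nonneg fun u _ =>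
    mul_nonneg (Nat.cast_nonneg _) (Finset.sum_nonneg fun v _ => norm_nonneg _)
  -- C1 : M_t ‖D_{M_t} x‖ ≤ g t
  have C1 : ∀ t, (Mf m t : ℝ) * ‖Dker m (Mf m t) x‖ ≤ g t := by
    intro t
    have hcongr : Dker m (Mf m t) x = Dker m (Mf m t) (x - (1:ℕ) • evec m t) := by
      refine (Dker_Mf_congr m hm t _ _ ?_).symm
      intro k hk
      rw [sub_evec_apply m (show k ≠ t by omega) x]
    have h1 : ‖Dker m (Mf m t) (x - (1:ℕ) • evec m t)‖
        ≤ ∑ v ∈ Finset.Icc 1 (m t - 1), ‖Dker m (Mf m t) (x - v • evec m t)‖ :=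
      Finset.single_le_sum (f := fun v => ‖Dker m (Mf m t) (x - v • evec m t)‖)
        (fun v _ => norm_nonneg _)
        (Finset.mem_Icc.mpr ⟨le_rfl, by have := hm t; omega⟩)
    have h2 : (Mf m t : ℝ) * ‖Dker m (Mf m t) x‖
        ≤ (Mf m t : ℝ) * ∑ v ∈ Finset.Icc 1 (m t - 1),
            ‖Dker m (Mf m t) (x - v • evec m t)‖ := by
      rw [hcongr]
      exact mul_le_mul_of_nonneg_left h1 (Nat.cast_nonneg _)
    refine le_trans h2 ?_
    exact Finset.single_le_sum (f := fun u => (Mf m u : ℝ) *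
        ∑ v ∈ Finset.Icc 1 (m u - 1), ‖Dker m (Mf m t) (x - v • evec m u)‖)
      (fun u _ => mul_nonneg (Nat.cast_nonneg _)
        (Finset.sum_nonneg fun v _ => norm_nonneg _))
      (mem_range.mpr (by omega))
  -- C2 : the sum from Svil_Mf_bound is ≤ 2 g t
  have C2 : ∀ t, ∑ u ∈ range t,
      (Mf m u : ℝ) * ‖Dker m (Mf m t) (x - ((x u).val) • evec m u)‖ ≤ 2 * g t := by
    intro t
    have hper : ∀ u ∈ range t,
        (Mf m u : ℝ) * ‖Dker m (Mf m t) (x - ((x u).val) • evec m u)‖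
        ≤ (Mf m u : ℝ) * ‖Dker m (Mf m t) x‖
          + (Mf m u : ℝ) * ∑ v ∈ Finset.Icc 1 (m u - 1),
              ‖Dker m (Mf m t) (x - v • evec m u)‖ := by
      intro u _
      haveI : NeZero (m u) := ⟨by have := hm u; omega⟩
      by_cases hval : (x u).val = 0
      · rw [hval]
        simp only [zero_smul, sub_zero]
        have : (0:ℝ) ≤ (Mf m u : ℝ) * ∑ v ∈ Finset.Icc 1 (m u - 1),
            ‖Dker m (Mf m t) (x - v • evec m u)‖ :=
          mul_nonneg (Nat.cast_nonneg _) (Finset.sum_nonneg fun v _ => norm_nonneg _)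
        linarith
      · have hvIcc : (x u).val ∈ Finset.Icc 1 (m u - 1) := by
          have := ZMod.val_lt (x u)
          exact Finset.mem_Icc.mpr ⟨by omega, by omega⟩
        have h1 : ‖Dker m (Mf m t) (x - ((x u).val) • evec m u)‖
            ≤ ∑ v ∈ Finset.Icc 1 (m u - 1), ‖Dker m (Mf m t) (x - v • evec m u)‖ :=
          Finset.single_le_sum (f := fun v => ‖Dker m (Mf m t) (x - v • evec m u)‖)
            (fun v _ => norm_nonneg _) hvIcc
        have h2 := mul_le_mul_of_nonneg_left h1 (Nat.cast_nonneg (Mf m u) : (0:ℝ) ≤ _)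
        have : (0:ℝ) ≤ (Mf m u : ℝ) * ‖Dker m (Mf m t) x‖ :=
          mul_nonneg (Nat.cast_nonneg _) (norm_nonneg _)
        linarith
    have hsplit : ∑ u ∈ range t,
        (Mf m u : ℝ) * ‖Dker m (Mf m t) (x - ((x u).val) • evec m u)‖
        ≤ (∑ u ∈ range t, (Mf m u : ℝ)) * ‖Dker m (Mf m t) x‖
          + ∑ u ∈ range t, (Mf m u : ℝ) * ∑ v ∈ Finset.Icc 1 (m u - 1),
              ‖Dker m (Mf m t) (x - v • evec m u)‖ := by
      rw [Finset.sum_mul, ← Finset.sum_add_distrib]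
      exact Finset.sum_le_sum hper
    have hMsum : (∑ u ∈ range t, (Mf m u : ℝ)) ≤ (Mf m t : ℝ) := by
      exact_mod_cast sum_Mf_le m hm t
    have h3 : (∑ u ∈ range t, (Mf m u : ℝ)) * ‖Dker m (Mf m t) x‖
        ≤ (Mf m t : ℝ) * ‖Dker m (Mf m t) x‖ :=
      mul_le_mul_of_nonneg_right hMsum (norm_nonneg _)
    have h4 : ∑ u ∈ range t, (Mf m u : ℝ) * ∑ v ∈ Finset.Icc 1 (m u - 1),
        ‖Dker m (Mf m t) (x - v • evec m u)‖ ≤ g t := by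
      rw [hg]
      exact Finset.sum_le_sum_of_subset_of_nonneg
        (Finset.range_subset_range.mpr (Nat.le_succ t))
        (fun u _ _ => mul_nonneg (Nat.cast_nonneg (Mf m u) : (0:ℝ) ≤ _)
          (Finset.sum_nonneg fun v _ => norm_nonneg _))
    have := C1 t
    linarith
  -- combine
  have main : ‖Svil m n x‖ ≤ (B:ℝ)^2 * (1 + 2*(B:ℝ)^2) * ∑ t ∈ range (A+1), g t := by
    have h0 := Svil_rec m hm B hB A n hn2 x
    have hbr : ∀ t ∈ range (A+1),
        (Mf m t : ℝ) * ‖Dker m (Mf m t) x‖ + ‖Svil m (Mf m t) x‖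
        ≤ (1 + 2*(B:ℝ)^2) * g t := by
      intro t _
      have h1 := Svil_Mf_bound m hm B hB t x
      have h2 := C2 t
      have h3 := C1 t
      have h4 : ‖Svil m (Mf m t) x‖ ≤ (B:ℝ)^2 * (2 * g t) := by
        calc ‖Svil m (Mf m t) x‖ ≤ (B:ℝ)^2 * ∑ u ∈ range t,
            (Mf m u : ℝ) * ‖Dker m (Mf m t) (x - ((x u).val) • evec m u)‖ := h1
          _ ≤ (B:ℝ)^2 * (2 * g t) := mul_le_mul_of_nonneg_left h2 hB20
      nlinarith [hg0 t]
    calc ‖Svil m n x‖ ≤ (B:ℝ)^2 *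
        ∑ t ∈ range (A+1), ((Mf m t : ℝ) * ‖Dker m (Mf m t) x‖ + ‖Svil m (Mf m t) x‖) := h0
      _ ≤ (B:ℝ)^2 * ∑ t ∈ range (A+1), (1 + 2*(B:ℝ)^2) * g t :=
          mul_le_mul_of_nonneg_left (Finset.sum_le_sum hbr) hB20
      _ = (B:ℝ)^2 * (1 + 2*(B:ℝ)^2) * ∑ t ∈ range (A+1), g t := by
          rw [← Finset.mul_sum]
          ring
  -- swap the order of summation
  have hswap : ∑ t ∈ range (A+1), g t = ∑ s ∈ Finset.range (A + 1), (Mf m s : ℝ) *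
      ∑ j ∈ Finset.Icc s A, ∑ v ∈ Finset.Icc 1 (m s - 1),
        ‖Dker m (Mf m j) (x - v • evec m s)‖ := by
    rw [hg]
    rw [Finset.sum_comm' (s := range (A+1)) (t := fun t => range (t+1))
      (t' := range (A+1)) (s' := fun u => Finset.Icc u A)
      (f := fun t u => (Mf m u : ℝ) * ∑ v ∈ Finset.Icc 1 (m u - 1),
        ‖Dker m (Mf m t) (x - v • evec m u)‖)
      (by intro t u; simp only [mem_range, Finset.mem_Icc]; omega)]
    exact Finset.sum_congr rfl fun s _ => by rw [Finset.mul_sum]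
  rw [hLHS, ← hswap]
  exact main
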